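/- arXiv:1604.04945 — 12 statements merged into one kernel-verified Lean document; each statement's English description precedes it below -/
import Mathlib

section
/- If K is a finite set with a ternary operation satisfying axioms T1–T4, then axiom T5 holds automatically; i.e., for x ≠ x' and any y, y' there is a unique pair (a,b) with y = ⟨ax+b⟩ and y' = ⟨ax'+b⟩. -/
/-- For a finite set with a ternary operation, axioms T1–T4 imply T5. -/
theorem finite_ternary_T5 {K : Type*} [Finite K] (zero one : K) (h01 : one ≠ zero)
    (t : K → K → K → K)
    (T1 : ∀ x, t one x zero = x ∧ t x one zero = x)
    (T2 : ∀ a b, t a zero b = b ∧ t zero a b = b)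
    (T3 : ∀ a x y, ∃! b, t a x b = y)
    (T4 : ∀ a a' b b', a ≠ a' → ∃! x, t a x b = t a' x b') :
    ∀ x x' y y' : K, x ≠ x' →
      ∃! p : K × K, t p.1 x p.2 = y ∧ t p.1 x' p.2 = y' := by
  intro x x' y y' hxx
  set φ : K × K → K × K := fun p => (t p.1 x p.2, t p.1 x' p.2) with hφ
  have hinj : Function.Injective φ := by
    rintro ⟨a, b⟩ ⟨a', b'⟩ h
    simp only [hφ, Prod.mk.injEq] at h
    obtain ⟨h1, h2⟩ := h
    rcases eq_or_ne a a' with rfl | hne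
    · obtain ⟨c, _, hc⟩ := T3 a x (t a x b')
      have := (hc b h1).trans (hc b' rfl).symm
      exact Prod.ext rfl this
    · obtain ⟨z, _, hz⟩ := T4 a a' b b' hne
      exact absurd ((hz x h1).trans (hz x' h2).symm) hxx
  have hsurj := (Finite.injective_iff_bijective.mp hinj).2
  obtain ⟨p, hp⟩ := hsurj (y, y')
  refine ⟨p, ?_, ?_⟩
  · simpa [hφ, Prod.ext_iff] using hp
  · intro q hq
    apply hinj
    rw [hp]
    simp [hφ, hq.1, hq.2]
end

section
/- If K is a ternary ring, then K² with vertical lines {(x₀,y) : y ∈ K} and lines {(x,y) : y = ⟨ax+b⟩} for a,b ∈ K is an affine plane. -/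
/-- A ternary ring: 0 ≠ 1 and a ternary operation satisfying T1–T5. -/
def IsTernaryRing {K : Type*} (zero one : K) (t : K → K → K → K) : Prop :=
  one ≠ zero ∧
  (∀ x, t one x zero = x ∧ t x one zero = x) ∧
  (∀ a b, t a zero b = b ∧ t zero a b = b) ∧
  (∀ a x y, ∃! b, t a x b = y) ∧
  (∀ a a' b b', a ≠ a' → ∃! x, t a x b = t a' x b') ∧
  (∀ x x' y y', x ≠ x' → ∃! p : K × K, t p.1 x p.2 = y ∧ t p.1 x' p.2 = y')

/-- The lines of the plane K² coordinatized by a ternary operation. -/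
def ternaryLines {K : Type*} (t : K → K → K → K) : Set (Set (K × K)) :=
  {S | (∃ c, S = {p : K × K | p.1 = c}) ∨ (∃ a b, S = {p : K × K | p.2 = t a p.1 b})}

/-- The plane K² over a ternary ring is an affine plane. -/
theorem ternaryRing_plane_is_affine {K : Type*} (zero one : K) (t : K → K → K → K)
    (hT : IsTernaryRing zero one t) :
    (∀ p q : K × K, p ≠ q → ∃! l, l ∈ ternaryLines t ∧ p ∈ l ∧ q ∈ l) ∧
    (∀ l ∈ ternaryLines t, ∀ p ∉ l,
      ∃! m, m ∈ ternaryLines t ∧ p ∈ m ∧ l ∩ m = ∅) ∧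
    (∃ p q r : K × K, ∀ l ∈ ternaryLines t, ¬(p ∈ l ∧ q ∈ l ∧ r ∈ l)) := by
  obtain ⟨h10, hT1, hT2, hT3, hT4, hT5⟩ := hT
  refine ⟨?_, ?_, ?_⟩
  · -- A1 : unique line through two distinct points
    intro p q hpq
    by_cases hx : p.1 = q.1
    · have hy : p.2 ≠ q.2 := fun h => hpq (Prod.ext hx h)
      refine ⟨{r : K × K | r.1 = p.1}, ⟨Or.inl ⟨p.1, rfl⟩, rfl, hx.symm⟩, ?_⟩
      rintro l ⟨hl, hp, hq⟩
      rcases hl with ⟨c, rfl⟩ | ⟨a, b, rfl⟩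
      · simp only [Set.mem_setOf_eq] at hp hq
        rw [hp]
      · simp only [Set.mem_setOf_eq] at hp hq
        exact absurd (hp.trans (by rw [hx, ← hq])) hy
    · obtain ⟨⟨a, b⟩, ⟨hpa, hqa⟩, huniq⟩ := hT5 p.1 q.1 p.2 q.2 hx
      refine ⟨{r : K × K | r.2 = t a r.1 b}, ⟨Or.inr ⟨a, b, rfl⟩, hpa.symm, hqa.symm⟩, ?_⟩
      rintro l ⟨hl, hp, hq⟩
      rcases hl with ⟨c, rfl⟩ | ⟨a', b', rfl⟩
      · simp only [Set.mem_setOf_eq] at hp hq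
        exact absurd (hp.trans hq.symm) hx
      · simp only [Set.mem_setOf_eq] at hp hq
        have := huniq (a', b') ⟨hp.symm, hq.symm⟩
        obtain ⟨h1, h2⟩ := Prod.mk.injEq .. ▸ this
        rw [h1, h2]
  · -- A2 : unique parallel
    intro l hl p hp
    rcases hl with ⟨c, rfl⟩ | ⟨a, b, rfl⟩
    · simp only [Set.mem_setOf_eq] at hp
      refine ⟨{r : K × K | r.1 = p.1}, ⟨Or.inl ⟨p.1, rfl⟩, rfl, ?_⟩, ?_⟩
      · ext r
        simp only [Set.mem_inter_iff, Set.mem_setOf_eq, Set.mem_empty_iff_false, iff_false,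
          not_and]
        intro h1 h2
        exact hp (h2 ▸ h1 ▸ rfl)
      · rintro m ⟨hm, hpm, hdisj⟩
        rcases hm with ⟨c', rfl⟩ | ⟨a, b, rfl⟩
        · simp only [Set.mem_setOf_eq] at hpm
          rw [hpm]
        · exact absurd (Set.eq_empty_iff_forall_notMem.mp hdisj (c, t a c b)
            ⟨rfl, rfl⟩) (by simp)
    · simp only [Set.mem_setOf_eq] at hp
      obtain ⟨b', hb', hb'u⟩ := hT3 a p.1 p.2
      have hbb' : b ≠ b' := fun h => hp (h ▸ hb').symm
      refine ⟨{r : K × K | r.2 = t a r.1 b'}, ⟨Or.inr ⟨a, b', rfl⟩, hb'.symm, ?_⟩, ?_⟩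
      · ext r
        simp only [Set.mem_inter_iff, Set.mem_setOf_eq, Set.mem_empty_iff_false, iff_false,
          not_and]
        intro h1 h2
        obtain ⟨c, -, hcu⟩ := hT3 a r.1 r.2
        exact hbb' ((hcu b h1.symm).trans (hcu b' h2.symm).symm)
      · rintro m ⟨hm, hpm, hdisj⟩
        rcases hm with ⟨c, rfl⟩ | ⟨a'', b'', rfl⟩
        · simp only [Set.mem_setOf_eq] at hpm
          exact absurd (Set.eq_empty_iff_forall_notMem.mp hdisj (c, t a c b)
            ⟨rfl, rfl⟩) (by simp)
        · simp only [Set.mem_setOf_eq] at hpm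
          by_cases haa : a = a''
          · subst haa
            have : b'' = b' := hb'u b'' hpm.symm
            rw [this]
          · obtain ⟨x, hx, -⟩ := hT4 a a'' b b'' haa
            exact absurd (Set.eq_empty_iff_forall_notMem.mp hdisj (x, t a x b)
              ⟨rfl, hx⟩) (by simp)
  · -- A3 : three non-collinear points
    refine ⟨(zero, zero), (one, zero), (zero, one), ?_⟩
    rintro l (⟨c, rfl⟩ | ⟨a, b, rfl⟩) ⟨hp, hq, hr⟩
    · simp only [Set.mem_setOf_eq] at hp hq
      exact h10 (hq.trans hp.symm)
    · simp only [Set.mem_setOf_eq] at hp hr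
      rw [(hT2 a b).1] at hp hr
      exact h10 (hr.trans hp.symm)
end

section
/- A finite weak left quasi-field is a left quasi-field; that is, if K is finite and satisfies VW1–VW4, then for all a ≠ a' and all b, the equation ax = a'x + b has a unique solution x. -/
/-- A weak left quasi-field: abelian additive group and axioms VW2–VW4. -/
def IsWeakLeftQuasifield {K : Type*} [AddCommGroup K] (mul : K → K → K) (one : K) : Prop :=
  one ≠ 0 ∧
  (∀ a b : K, a ≠ 0 → b ≠ 0 →
    (∃! x, mul a x = b) ∧ (∃! x, mul x a = b) ∧
    (∀ x, mul a x = b → x ≠ 0) ∧ (∀ x, mul x a = b → x ≠ 0) ∧ mul a b ≠ 0) ∧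
  (∀ x : K, mul one x = x ∧ mul x one = x ∧ mul 0 x = 0 ∧ mul x 0 = 0) ∧
  (∀ a x y : K, mul a (x + y) = mul a x + mul a y)

/-- A finite weak left quasi-field satisfies VW5, hence is a left quasi-field. -/
theorem finite_weakLeftQuasifield_VW5 {K : Type*} [AddCommGroup K] [Finite K]
    (mul : K → K → K) (one : K) (hQ : IsWeakLeftQuasifield mul one) :
    ∀ a a' b : K, a ≠ a' → ∃! x, mul a x = mul a' x + b := by
  obtain ⟨_, hVW2, hVW3, hVW4⟩ := hQ
  intro a a' b hne
  -- mul a (-y) = - mul a y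
  have hneg : ∀ c y : K, mul c (-y) = - mul c y := by
    intro c y
    have h := hVW4 c y (-y)
    rw [add_neg_cancel, (hVW3 c).2.2.2] at h
    exact eq_neg_of_add_eq_zero_right h.symm
  -- the key map
  set f : K → K := fun x => mul a x - mul a' x with hf
  have hinj : Function.Injective f := by
    intro x y hxy
    by_contra hxyne
    have hz : x - y ≠ 0 := sub_ne_zero.mpr hxyne
    have heq : mul a (x - y) = mul a' (x - y) := by
      have h1 : mul a (x - y) = mul a x - mul a y := by
        rw [sub_eq_add_neg, hVW4, hneg, ← sub_eq_add_neg]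
      have h2 : mul a' (x - y) = mul a' x - mul a' y := by
        rw [sub_eq_add_neg, hVW4, hneg, ← sub_eq_add_neg]
      simp only [hf] at hxy
      rw [h1, h2]
      exact sub_eq_sub_iff_sub_eq_sub.mp hxy
    by_cases ha : a = 0
    · have ha' : a' ≠ 0 := by rw [ha] at hne; exact (Ne.symm hne)
      have : mul a (x - y) = 0 := by rw [ha, (hVW3 (x-y)).2.2.1]
      exact (hVW2 a' (x - y) ha' hz).2.2.2.2 (by rw [← heq, this])
    · by_cases ha' : a' = 0
      · have : mul a' (x - y) = 0 := by rw [ha', (hVW3 (x-y)).2.2.1]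
        exact (hVW2 a (x - y) ha hz).2.2.2.2 (by rw [heq, this])
      · -- both nonzero, c := mul a (x-y) ≠ 0
        have hc : mul a (x - y) ≠ 0 := (hVW2 a (x - y) ha hz).2.2.2.2
        obtain ⟨w, _, huniq⟩ := (hVW2 (x - y) (mul a (x - y)) hz hc).2.1
        exact hne ((huniq a rfl).trans (huniq a' heq.symm).symm)
  have hsurj : Function.Surjective f := Finite.surjective_of_injective hinj
  obtain ⟨x, hx⟩ := hsurj b
  refine ⟨x, ?_, ?_⟩
  · simp only [hf] at hx; exact (eq_add_of_sub_eq hx).trans (add_comm _ _)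
  · intro y hy
    apply hinj
    simp only [hf] at hx ⊢
    rw [hx]
    exact sub_eq_of_eq_add (hy.trans (add_comm _ _))
end

section
/- Let K be a weak left quasi-field containing a skew-field F (under the same operations, with the same 0 and 1) such that (xy)a = x(ya) and (x+y)a = xa + ya for all a ∈ F and x,y ∈ K. Then K is a right vector space over F, and if this vector space is finite-dimensional, then K is a left quasi-field (axiom VW5 holds). -/
/-- A weak left quasi-field containing a skew-field `F` (with the same operations,
0 and 1) such that `(xy)a = x(ya)` and `(x+y)a = xa + ya` for `a ∈ F`, `x, y ∈ K`,
is a right vector space over `F` (with scalar multiplication `x • a := x · ι a`);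
and if this vector space is finite-dimensional, then VW5 holds, so `K` is a
left quasi-field. -/
theorem weakLeftQuasifield_of_skewField_finiteDim {K F : Type*} [AddCommGroup K]
    [DivisionRing F] (mul : K → K → K) (one : K)
    (hQ : IsWeakLeftQuasifield mul one)
    (ι : F → K) (hinj : Function.Injective ι)
    (h0 : ι 0 = 0) (h1 : ι 1 = one)
    (hadd : ∀ a b : F, ι (a + b) = ι a + ι b)
    (hmulF : ∀ a b : F, ι (a * b) = mul (ι a) (ι b))
    (hassoc : ∀ (a : F) (x y : K), mul (mul x y) (ι a) = mul x (mul y (ι a)))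
    (hdistr : ∀ (a : F) (x y : K), mul (x + y) (ι a) = mul x (ι a) + mul y (ι a)) :
    -- K is a right vector space over F:
    ((∀ (x : K) (a b : F), mul x (ι (a * b)) = mul (mul x (ι a)) (ι b)) ∧
     (∀ x : K, mul x (ι 1) = x) ∧
     (∀ (x : K) (a b : F), mul x (ι (a + b)) = mul x (ι a) + mul x (ι b)) ∧
     (∀ (x y : K) (a : F), mul (x + y) (ι a) = mul x (ι a) + mul y (ι a))) ∧
    -- if finite-dimensional, VW5 holds:
    ((∃ s : Finset K, ∀ x : K, ∃ c : K → F, x = ∑ v ∈ s, mul v (ι (c v))) →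
      ∀ a a' b : K, a ≠ a' → ∃! x, mul a x = mul a' x + b) := by
  obtain ⟨hone, hVW2, hVW3, hVW4⟩ := hQ
  have hmul0 : ∀ x : K, mul 0 x = 0 := fun x => (hVW3 x).2.2.1
  have hmulx0 : ∀ x : K, mul x 0 = 0 := fun x => (hVW3 x).2.2.2
  have part1a : ∀ (x : K) (a b : F), mul x (ι (a * b)) = mul (mul x (ι a)) (ι b) := by
    intro x a b
    rw [hmulF, hassoc]
  have part1b : ∀ x : K, mul x (ι 1) = x := by
    intro x; rw [h1]; exact (hVW3 x).2.1
  have part1c : ∀ (x : K) (a b : F), mul x (ι (a + b)) = mul x (ι a) + mul x (ι b) := by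
    intro x a b; rw [hadd, hVW4]
  refine ⟨⟨part1a, part1b, part1c, fun x y a => hdistr a x y⟩, ?_⟩
  rintro ⟨s, hs⟩ a a' b hne
  -- subtraction lemmas
  have hnegl : ∀ x y : K, mul x (-y) = -mul x y := by
    intro x y
    have := hVW4 x y (-y)
    rw [add_neg_cancel, hmulx0 x] at this
    exact (neg_eq_of_add_eq_zero_right this.symm).symm
  have hsubl : ∀ x y z : K, mul x (y - z) = mul x y - mul x z := by
    intro x y z
    rw [sub_eq_add_neg, hVW4, hnegl, sub_eq_add_neg]
  have hnegr : ∀ (c : F) (y : K), mul (-y) (ι c) = -mul y (ι c) := by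
    intro c y
    have := hdistr c y (-y)
    rw [add_neg_cancel, hmul0] at this
    exact (neg_eq_of_add_eq_zero_right this.symm).symm
  -- set up right module structure over Fᵐᵒᵖ
  letI : SMul Fᵐᵒᵖ K := ⟨fun c x => mul x (ι c.unop)⟩
  have hsmul : ∀ (c : Fᵐᵒᵖ) (x : K), c • x = mul x (ι c.unop) := fun _ _ => rfl
  letI : Module Fᵐᵒᵖ K :=
    { one_smul := fun x => by rw [hsmul]; exact part1b x
      mul_smul := fun c d x => by
        rw [hsmul, hsmul, hsmul]
        show mul x (ι (d.unop * c.unop)) = _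
        rw [part1a]
      smul_zero := fun c => by rw [hsmul]; exact hmul0 _
      smul_add := fun c x y => by rw [hsmul, hsmul, hsmul]; exact hdistr _ x y
      add_smul := fun c d x => by
        rw [hsmul, hsmul, hsmul]
        show mul x (ι (c.unop + d.unop)) = _
        exact part1c x _ _
      zero_smul := fun x => by rw [hsmul]; show mul x (ι 0) = 0; rw [h0]; exact hmulx0 x }
  haveI : Module.Finite Fᵐᵒᵖ K := by
    refine ⟨⟨s, ?_⟩⟩
    rw [Submodule.eq_top_iff']
    intro x
    obtain ⟨c, hc⟩ := hs x
    rw [hc]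
    exact Submodule.sum_mem _ fun v hv =>
      Submodule.smul_mem _ (MulOpposite.op (c v)) (Submodule.subset_span hv)
  -- the linear map T x = a x - a' x
  let T : K →ₗ[Fᵐᵒᵖ] K :=
    { toFun := fun x => mul a x - mul a' x
      map_add' := fun x y => by simp only [hVW4]; abel
      map_smul' := fun c x => by
        simp only [RingHom.id_apply, hsmul]
        rw [← hassoc, ← hassoc, sub_eq_add_neg, ← hnegr, ← hdistr, ← sub_eq_add_neg] }
  have hT : ∀ x : K, T x = mul a x - mul a' x := fun _ => rfl
  -- T is injective
  have hTinj : Function.Injective T := by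
    intro x y hxy
    by_contra hxyne
    have hz : x - y ≠ 0 := sub_ne_zero.mpr hxyne
    have heq : mul a (x - y) = mul a' (x - y) := by
      rw [hsubl, hsubl]
      have : mul a x - mul a' x = mul a y - mul a' y := hxy
      have h2 : mul a x - mul a y = mul a' x - mul a' y := by
        rw [sub_eq_sub_iff_sub_eq_sub] at this; exact this
      exact h2
    set z := x - y with hzdef
    have ha : a ≠ 0 := by
      intro h
      rw [h, hmul0] at heq
      have ha' : a' ≠ 0 := by intro h'; exact hne (h.trans h'.symm)
      exact (hVW2 a' z ha' hz).2.2.2.2 heq.symm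
    have ha' : a' ≠ 0 := by
      intro h
      rw [h, hmul0] at heq
      exact (hVW2 a z ha hz).2.2.2.2 heq
    have hb : mul a z ≠ 0 := (hVW2 a z ha hz).2.2.2.2
    obtain ⟨w, -, huniq⟩ := (hVW2 z (mul a z) hz hb).2.1
    exact hne ((huniq a rfl).trans (huniq a' heq.symm).symm)
  -- finite dimensional ⇒ surjective
  have hTsurj : Function.Surjective T := by
    haveI : FiniteDimensional Fᵐᵒᵖ K := ‹Module.Finite Fᵐᵒᵖ K›
    exact (LinearMap.injective_iff_surjective).mp hTinj
  obtain ⟨x, hx⟩ := hTsurj b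
  refine ⟨x, ?_, ?_⟩
  · rw [hT] at hx
    rw [← hx]; abel
  · intro y hy
    apply hTinj
    rw [hT] at hx
    rw [hT, hT, hy, hx]
    abel
end

section
/- Let K' be a left near-field. For any two points z, z' of the affine plane (K')² neither of which lies on the horizontal axis K'×{0} or the vertical axis {0}×K', there is an automorphism of the affine plane (K')² fixing the origin, the horizontal axis, and the vertical axis (setwise), and taking z to z'. -/
/-- A left quasi-field: abelian additive group and axioms VW2–VW5. -/
def IsLeftQuasifield {K : Type*} [AddCommGroup K] (mul : K → K → K) (one : K) : Prop :=
  one ≠ 0 ∧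
  (∀ a b : K, a ≠ 0 → b ≠ 0 →
    (∃! x, mul a x = b) ∧ (∃! x, mul x a = b) ∧
    (∀ x, mul a x = b → x ≠ 0) ∧ (∀ x, mul x a = b → x ≠ 0) ∧ mul a b ≠ 0) ∧
  (∀ x : K, mul one x = x ∧ mul x one = x ∧ mul 0 x = 0 ∧ mul x 0 = 0) ∧
  (∀ a x y : K, mul a (x + y) = mul a x + mul a y) ∧
  (∀ a a' b : K, a ≠ a' → ∃! x, mul a x = mul a' x + b)

/-- A left near-field is a left quasi-field with associative multiplication. -/
def IsLeftNearField {K : Type*} [AddCommGroup K] (mul : K → K → K) (one : K) : Prop :=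
  IsLeftQuasifield mul one ∧ ∀ x y z : K, mul (mul x y) z = mul x (mul y z)

/-- The lines of the affine plane K²: vertical lines x = c and lines y = ax + b. -/
def qLines {K : Type*} [AddCommGroup K] (mul : K → K → K) : Set (Set (K × K)) :=
  {S | (∃ c, S = {p : K × K | p.1 = c}) ∨ (∃ a b, S = {p : K × K | p.2 = mul a p.1 + b})}

/-- For a left near-field K', and points z, z' off both axes, there is an
automorphism of the plane (K')² fixing the origin and both axes (setwise)
and taking z to z'. -/
theorem nearField_axis_preserving_automorphism {K' : Type*} [AddCommGroup K']
    (mul : K' → K' → K') (one : K') (hN : IsLeftNearField mul one)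
    (z z' : K' × K')
    (hz : z ∉ ({p : K' × K' | p.2 = 0} : Set (K' × K')) ∧
          z ∉ ({p : K' × K' | p.1 = 0} : Set (K' × K')))
    (hz' : z' ∉ ({p : K' × K' | p.2 = 0} : Set (K' × K')) ∧
           z' ∉ ({p : K' × K' | p.1 = 0} : Set (K' × K'))) :
    ∃ f : K' × K' → K' × K', Function.Bijective f ∧
      (∀ l ∈ qLines mul, f '' l ∈ qLines mul) ∧
      f (0, 0) = (0, 0) ∧
      f '' {p : K' × K' | p.2 = 0} = {p : K' × K' | p.2 = 0} ∧
      f '' {p : K' × K' | p.1 = 0} = {p : K' × K' | p.1 = 0} ∧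
      f z = z' := by
  obtain ⟨⟨hone, hmag, hid, hdist, _⟩, hassoc⟩ := hN
  have hz1 : z.1 ≠ 0 := fun h => hz.2 h
  have hz2 : z.2 ≠ 0 := fun h => hz.1 h
  have hz'1 : z'.1 ≠ 0 := fun h => hz'.2 h
  have hz'2 : z'.2 ≠ 0 := fun h => hz'.1 h
  -- obtain c with mul c z.1 = z'.1
  obtain ⟨c, hc1, -⟩ := (hmag z.1 z'.1 hz1 hz'1).2.1
  have hc0 : c ≠ 0 := (hmag z.1 z'.1 hz1 hz'1).2.2.2.1 c hc1
  obtain ⟨d, hd1, -⟩ := (hmag z.2 z'.2 hz2 hz'2).2.1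
  have hd0 : d ≠ 0 := (hmag z.2 z'.2 hz2 hz'2).2.2.2.1 d hd1
  -- two-sided inverses
  have hinv : ∀ u : K', u ≠ 0 → ∃ v, mul v u = one ∧ mul u v = one ∧ v ≠ 0 := by
    intro u hu
    obtain ⟨v, hv1, -⟩ := (hmag u one hu hone).2.1
    have hv0 : v ≠ 0 := (hmag u one hu hone).2.2.2.1 v hv1
    refine ⟨v, hv1, ?_, hv0⟩
    have huniq := (hmag u u hu hu).2.1
    have h1 : mul (mul u v) u = u := by
      rw [hassoc, hv1, (hid u).2.1]
    have h2 : mul one u = u := (hid u).1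
    exact (huniq.unique h1 h2)
  obtain ⟨e, hec, hce, he0⟩ := hinv c hc0
  obtain ⟨e', hed, hde, he'0⟩ := hinv d hd0
  have hcancL : ∀ x, mul e (mul c x) = x := fun x => by rw [← hassoc, hec, (hid x).1]
  have hcancL' : ∀ x, mul c (mul e x) = x := fun x => by rw [← hassoc, hce, (hid x).1]
  have hcancR : ∀ x, mul e' (mul d x) = x := fun x => by rw [← hassoc, hed, (hid x).1]
  have hcancR' : ∀ x, mul d (mul e' x) = x := fun x => by rw [← hassoc, hde, (hid x).1]
  refine ⟨fun p => (mul c p.1, mul d p.2), ?_, ?_, ?_, ?_, ?_, ?_⟩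
  · rw [Function.bijective_iff_has_inverse]
    refine ⟨fun p => (mul e p.1, mul e' p.2), fun p => ?_, fun p => ?_⟩
    · simp [hcancL, hcancR]
    · simp [hcancL', hcancR']
  · rintro l (⟨t, rfl⟩ | ⟨a, b, rfl⟩)
    · left
      refine ⟨mul c t, ?_⟩
      ext p
      constructor
      · rintro ⟨q, hq, rfl⟩
        simp only [Set.mem_setOf_eq] at hq ⊢
        rw [hq]
      · intro hp
        refine ⟨(t, mul e' p.2), rfl, ?_⟩
        simp only [Set.mem_setOf_eq] at hp
        simp only [hcancR']
        exact Prod.ext hp.symm rfl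
    · right
      by_cases ha : a = 0
      · refine ⟨0, mul d b, ?_⟩
        ext p
        constructor
        · rintro ⟨q, hq, rfl⟩
          simp only [Set.mem_setOf_eq, ha, (hid _).2.2.1, zero_add] at hq ⊢
          rw [hq]
        · intro hp
          simp only [Set.mem_setOf_eq, (hid _).2.2.1, zero_add] at hp
          refine ⟨(mul e p.1, b), ?_, ?_⟩
          · simp only [Set.mem_setOf_eq, ha, (hid _).2.2.1, zero_add]
          · simp only [hcancL']
            exact Prod.ext rfl hp.symm
      · refine ⟨mul (mul d a) e, mul d b, ?_⟩
        ext p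
        constructor
        · rintro ⟨q, hq, rfl⟩
          simp only [Set.mem_setOf_eq] at hq ⊢
          rw [hq, hdist, hassoc, hcancL, hassoc]
        · intro hp
          simp only [Set.mem_setOf_eq] at hp
          refine ⟨(mul e p.1, mul a (mul e p.1) + b), rfl, ?_⟩
          simp only [hcancL']
          refine Prod.ext rfl ?_
          rw [hp, hassoc (mul d a) e p.1, hdist, hassoc]
  · simp [(hid _).2.2.2]
  · ext p
    constructor
    · rintro ⟨q, hq, rfl⟩
      simp only [Set.mem_setOf_eq] at hq ⊢
      rw [hq, (hid _).2.2.2]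
    · intro hp
      simp only [Set.mem_setOf_eq] at hp
      exact ⟨(mul e p.1, 0), rfl, by simp [hcancL', (hid _).2.2.2, Prod.ext_iff, hp]⟩
  · ext p
    constructor
    · rintro ⟨q, hq, rfl⟩
      simp only [Set.mem_setOf_eq] at hq ⊢
      rw [hq, (hid _).2.2.2]
    · intro hp
      simp only [Set.mem_setOf_eq] at hp
      exact ⟨(0, mul e' p.2), rfl, by simp [hcancR', (hid _).2.2.2, Prod.ext_iff, hp]⟩
  · exact Prod.ext hc1 hd1
end

section
/- Let z, z' be two distinct points of an affine plane and l the line through them. There is at most one translation taking z to z', and if such a translation exists, it leaves invariant every line parallel to l. -/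
/-- Two lines are parallel if they are equal or disjoint. -/
def Parallel {P : Type*} (l m : Set P) : Prop := l = m ∨ l ∩ m = ∅

/-- An affine plane structure on a set of lines L. -/
def IsAffinePlane {P : Type*} (L : Set (Set P)) : Prop :=
  (∀ p q : P, p ≠ q → ∃! l, l ∈ L ∧ p ∈ l ∧ q ∈ l) ∧
  (∀ l ∈ L, ∀ p ∉ l, ∃! m, m ∈ L ∧ p ∈ m ∧ l ∩ m = ∅) ∧
  (∃ p q r : P, ∀ l ∈ L, ¬(p ∈ l ∧ q ∈ l ∧ r ∈ l))

/-- A translation: an automorphism taking each line to a parallel line and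
preserving every line of some parallel class. -/
def IsTranslation {P : Type*} (L : Set (Set P)) (f : P → P) : Prop :=
  Function.Bijective f ∧
  (∀ l ∈ L, f '' l ∈ L) ∧
  (∀ l ∈ L, Parallel (f '' l) l) ∧
  (∃ l₀ ∈ L, ∀ l ∈ L, Parallel l l₀ → f '' l = l)

section Aux

variable {P : Type*} {L : Set (Set P)}

lemma line_unique (hA : IsAffinePlane L) {p q : P} (hpq : p ≠ q)
    {l m : Set P} (hl : l ∈ L) (hm : m ∈ L) (h1 : p ∈ l) (h2 : q ∈ l)
    (h3 : p ∈ m) (h4 : q ∈ m) : l = m := by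
  obtain ⟨n, -, hu⟩ := hA.1 p q hpq
  rw [hu l ⟨hl, h1, h2⟩, hu m ⟨hm, h3, h4⟩]

lemma par_trans (hA : IsAffinePlane L) {m l l₀ : Set P}
    (hm : m ∈ L) (hl : l ∈ L) (hl₀ : l₀ ∈ L)
    (h1 : Parallel m l) (h2 : Parallel l l₀) : Parallel m l₀ := by
  rcases h1 with rfl | h1
  · exact h2
  rcases h2 with rfl | h2
  · exact Or.inr h1
  by_cases hml : m = l₀
  · exact Or.inl hml
  right
  by_contra hne
  obtain ⟨p, hpm, hpl₀⟩ := Set.nonempty_iff_ne_empty.2 hne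
  have hpl : p ∉ l := fun hpl => Set.eq_empty_iff_forall_notMem.1 h2 p ⟨hpl, hpl₀⟩
  obtain ⟨u, -, hu⟩ := hA.2.1 l hl p hpl
  have e1 : m = u := hu m ⟨hm, hpm, by rw [Set.inter_comm]; exact h1⟩
  have e2 : l₀ = u := hu l₀ ⟨hl₀, hpl₀, h2⟩
  exact hml (e1.trans e2.symm)

lemma fixes_parallel (hA : IsAffinePlane L) {f : P → P} (hf : IsTranslation L f)
    {z z' : P} (hzz : z ≠ z') (hfz : f z = z')
    {l : Set P} (hl : l ∈ L) (hzl : z ∈ l) (hz'l : z' ∈ l) :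
    ∀ m ∈ L, Parallel m l → f '' m = m := by
  obtain ⟨hbij, hmap, hpar, l₀, hl₀, hfix⟩ := hf
  have hll₀ : Parallel l l₀ := by
    by_cases hz0 : z ∈ l₀
    · have hfl₀ : f '' l₀ = l₀ := hfix l₀ hl₀ (Or.inl rfl)
      have hz'0 : z' ∈ l₀ := by rw [← hfl₀]; exact ⟨z, hz0, hfz⟩
      exact Or.inl (line_unique hA hzz hl hl₀ hzl hz'l hz0 hz'0)
    · obtain ⟨k, ⟨hk, hzk, hlk⟩, -⟩ := hA.2.1 l₀ hl₀ z hz0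
      have hkpar : Parallel k l₀ := Or.inr (by rw [Set.inter_comm]; exact hlk)
      have hfk : f '' k = k := hfix k hk hkpar
      have hz'k : z' ∈ k := by rw [← hfk]; exact ⟨z, hzk, hfz⟩
      have hlk' : l = k := line_unique hA hzz hl hk hzl hz'l hzk hz'k
      exact Or.inr (by rw [Set.inter_comm, hlk']; exact hlk)
  intro m hm hml
  exact hfix m hm (par_trans hA hm hl hl₀ hml hll₀)

lemma translate_mem (hA : IsAffinePlane L) {f : P → P} (hf : IsTranslation L f)
    {z z' : P} (hzz : z ≠ z') (hfz : f z = z')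
    {l : Set P} (hl : l ∈ L) (hzl : z ∈ l) (hz'l : z' ∈ l)
    {p : P} (hp : p ∉ l)
    {m' : Set P} (hm' : m' ∈ L) (hpm' : p ∈ m') (hlm' : l ∩ m' = ∅)
    {n n' : Set P} (hn : n ∈ L) (hzn : z ∈ n) (hpn : p ∈ n)
    (hn' : n' ∈ L) (hz'n' : z' ∈ n') (hnn' : n ∩ n' = ∅) :
    f p ∈ m' ∧ f p ∈ n' := by
  have hfm' : f '' m' = m' := fixes_parallel hA hf hzz hfz hl hzl hz'l m' hm'
    (Or.inr (by rw [Set.inter_comm]; exact hlm'))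
  constructor
  · rw [← hfm']; exact ⟨p, hpm', rfl⟩
  · have hz'n : z' ∉ n := by
      intro h
      exact hp (by rw [line_unique hA hzz hl hn hzl hz'l hzn h]; exact hpn)
    obtain ⟨hbij, hmap, hpar, -⟩ := hf
    have h1 : f '' n ∈ L := hmap n hn
    have h2 : z' ∈ f '' n := ⟨z, hzn, hfz⟩
    have h3 : n ∩ f '' n = ∅ := by
      rcases hpar n hn with he | he
      · exact absurd (he ▸ h2) hz'n
      · rw [Set.inter_comm]; exact he
    obtain ⟨u, -, hu⟩ := hA.2.1 n hn z' hz'n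
    have e1 : f '' n = u := hu _ ⟨h1, h2, h3⟩
    have e2 : n' = u := hu _ ⟨hn', hz'n', hnn'⟩
    rw [← e2] at e1
    rw [← e1]
    exact ⟨p, hpn, rfl⟩

lemma agree (hA : IsAffinePlane L) {f g : P → P}
    (hf : IsTranslation L f) (hg : IsTranslation L g)
    {z z' : P} (hzz : z ≠ z') (hfz : f z = z') (hgz : g z = z')
    {l : Set P} (hl : l ∈ L) (hzl : z ∈ l) (hz'l : z' ∈ l)
    {p : P} (hp : p ∉ l) :
    f p = g p ∧ f p ≠ p ∧ ∃ m' ∈ L, p ∈ m' ∧ f p ∈ m' ∧ l ∩ m' = ∅ := by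
  obtain ⟨m', ⟨hm', hpm', hlm'⟩, -⟩ := hA.2.1 l hl p hp
  have hzp : z ≠ p := fun h => hp (h ▸ hzl)
  obtain ⟨n, ⟨hn, hzn, hpn⟩, -⟩ := hA.1 z p hzp
  have hz'n : z' ∉ n := by
    intro h
    exact hp (by rw [line_unique hA hzz hl hn hzl hz'l hzn h]; exact hpn)
  obtain ⟨n', ⟨hn', hz'n', hnn'⟩, -⟩ := hA.2.1 n hn z' hz'n
  obtain ⟨hfpm', hfpn'⟩ := translate_mem hA hf hzz hfz hl hzl hz'l hp
    hm' hpm' hlm' hn hzn hpn hn' hz'n' hnn'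
  obtain ⟨hgpm', hgpn'⟩ := translate_mem hA hg hzz hgz hl hzl hz'l hp
    hm' hpm' hlm' hn hzn hpn hn' hz'n' hnn'
  have hpn' : p ∉ n' := fun h => Set.eq_empty_iff_forall_notMem.1 hnn' p ⟨hpn, h⟩
  have hfgp : f p = g p := by
    by_contra hne
    have hmn : m' = n' := line_unique hA hne hm' hn' hfpm' hgpm' hfpn' hgpn'
    exact hpn' (hmn ▸ hpm')
  exact ⟨hfgp, fun h => hpn' (h ▸ hfpn'), m', hm', hpm', hfpm', hlm'⟩

end Aux

/-- There is at most one translation taking z to z', and any such translation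
leaves invariant every line parallel to the line l through z and z'. -/
theorem translation_unique_and_traces {P : Type*} (L : Set (Set P))
    (hA : IsAffinePlane L) (z z' : P) (hzz : z ≠ z')
    (l : Set P) (hl : l ∈ L) (hzl : z ∈ l) (hz'l : z' ∈ l) :
    (∀ f g : P → P, IsTranslation L f → IsTranslation L g →
      f z = z' → g z = z' → f = g) ∧
    (∀ f : P → P, IsTranslation L f → f z = z' →
      ∀ m ∈ L, Parallel m l → f '' m = m) := by
  constructor
  · intro f g hf hg hfz hgz
    funext p
    by_cases hp : p ∈ l
    · obtain ⟨a, b, c, h3⟩ := hA.2.2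
      have hq : ∃ q, q ∉ l := by
        by_contra h
        push_neg at h
        exact h3 l hl ⟨h a, h b, h c⟩
      obtain ⟨q, hq⟩ := hq
      obtain ⟨hfgq, hfq, m', hm', hqm', hfqm', hlm'⟩ :=
        agree hA hf hg hzz hfz hgz hl hzl hz'l hq
      have hpm' : p ∉ m' := fun h => Set.eq_empty_iff_forall_notMem.1 hlm' p ⟨hp, h⟩
      exact (agree hA hf hg (Ne.symm hfq) rfl hfgq.symm hm' hqm' hfqm' hpm').1
    · exact (agree hA hf hg hzz hfz hgz hl hzl hz'l hp).1
  · intro f hf hfz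
    exact fixes_parallel hA hf hzz hfz hl hzl hz'l
end

section
/- Let K be a left quasi-field and c, d ∈ K. The map f(x,y) = (x+c, y+d) is a translation of the affine plane K². Consequently, for any two points of K² there is a translation taking one to the other. -/
/-- For a left quasi-field K and c, d ∈ K, the map (x,y) ↦ (x+c, y+d) is a
translation of the plane K²; consequently for any two points of K² there is a
translation taking one to the other. -/
theorem leftQuasifield_translations {K : Type*} [AddCommGroup K]
    (mul : K → K → K) (one : K) (hQ : IsLeftQuasifield mul one) :
    (∀ c d : K, IsTranslation (qLines mul) (fun p : K × K => (p.1 + c, p.2 + d))) ∧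
    (∀ p q : K × K, ∃ f : K × K → K × K,
      IsTranslation (qLines mul) f ∧ f p = q) := by
  obtain ⟨hone, hVW2, hunit, hdist, hVW5⟩ := hQ
  have mz : ∀ a : K, mul a 0 = 0 := fun a => (hunit a).2.2.2
  have mz' : ∀ a : K, mul 0 a = 0 := fun a => (hunit a).2.2.1
  have mneg : ∀ a x : K, mul a (-x) = -(mul a x) := by
    intro a x
    have h := hdist a x (-x)
    rw [add_neg_cancel, mz] at h
    exact eq_neg_of_add_eq_zero_right h.symm
  have msub : ∀ a x y : K, mul a (x - y) = mul a x - mul a y := by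
    intro a x y
    rw [sub_eq_add_neg, hdist, mneg, sub_eq_add_neg]
  have main : ∀ c d : K, IsTranslation (qLines mul)
      (fun p : K × K => (p.1 + c, p.2 + d)) := by
    intro c d
    set f : K × K → K × K := fun p => (p.1 + c, p.2 + d) with hf
    have himg : ∀ S : Set (K × K), f '' S = {p | (p.1 - c, p.2 - d) ∈ S} := by
      intro S; ext p; constructor
      · rintro ⟨q, hq, rfl⟩; simpa [hf] using hq
      · intro hp; exact ⟨(p.1 - c, p.2 - d), hp, by simp [hf]⟩
    have himgV : ∀ c₀ : K, f '' {p : K × K | p.1 = c₀} = {p : K × K | p.1 = c₀ + c} := by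
      intro c₀; rw [himg]; ext p; simp [sub_eq_iff_eq_add]
    have himgS : ∀ a b : K, f '' {p : K × K | p.2 = mul a p.1 + b}
        = {p : K × K | p.2 = mul a p.1 + (b + d - mul a c)} := by
      intro a b; rw [himg]; ext p
      simp only [Set.mem_setOf_eq, msub]
      constructor
      · intro h
        rw [sub_eq_iff_eq_add.mp h]; abel
      · intro h; rw [h]; abel
    have parV : ∀ c₁ c₂ : K, Parallel {p : K × K | p.1 = c₁} {p : K × K | p.1 = c₂} := by
      intro c₁ c₂
      by_cases h : c₁ = c₂
      · exact Or.inl (by rw [h])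
      · refine Or.inr (Set.eq_empty_iff_forall_notMem.mpr ?_)
        rintro p ⟨h1, h2⟩
        exact h (h1.symm.trans h2)
    have parS : ∀ a b₁ b₂ : K, Parallel {p : K × K | p.2 = mul a p.1 + b₁}
        {p : K × K | p.2 = mul a p.1 + b₂} := by
      intro a b₁ b₂
      by_cases h : b₁ = b₂
      · exact Or.inl (by rw [h])
      · refine Or.inr (Set.eq_empty_iff_forall_notMem.mpr ?_)
        rintro p ⟨h1, h2⟩
        exact h (add_left_cancel (h1.symm.trans h2))
    refine ⟨⟨?_, ?_⟩, ?_, ?_, ?_⟩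
    · intro p q h
      simp only [hf, Prod.mk.injEq] at h
      exact Prod.ext (add_right_cancel h.1) (add_right_cancel h.2)
    · intro p; exact ⟨(p.1 - c, p.2 - d), by simp [hf]⟩
    · rintro l (⟨c₀, rfl⟩ | ⟨a, b, rfl⟩)
      · rw [himgV]; exact Or.inl ⟨c₀ + c, rfl⟩
      · rw [himgS]; exact Or.inr ⟨a, _, rfl⟩
    · rintro l (⟨c₀, rfl⟩ | ⟨a, b, rfl⟩)
      · rw [himgV]; exact parV _ _
      · rw [himgS]; exact parS _ _ _
    · by_cases hc : c = 0
      · refine ⟨{p : K × K | p.1 = 0}, Or.inl ⟨0, rfl⟩, ?_⟩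
        rintro l (⟨c₀, rfl⟩ | ⟨a, b, rfl⟩) hpar
        · rw [himgV, hc, add_zero]
        · exfalso
          rcases hpar with heq | hdisj
          · have h1 : ((one : K), mul a one + b) ∈
                {p : K × K | p.2 = mul a p.1 + b} := rfl
            rw [heq] at h1
            exact hone h1
          · have hmem : ((0 : K), mul a 0 + b) ∈
                ({p : K × K | p.2 = mul a p.1 + b} ∩ {p : K × K | p.1 = (0:K)}) :=
              ⟨rfl, rfl⟩
            exact Set.eq_empty_iff_forall_notMem.mp hdisj _ hmem
      · obtain ⟨a, ha⟩ : ∃ a : K, mul a c = d := by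
          by_cases hd : d = 0
          · exact ⟨0, by rw [mz' c, hd]⟩
          · obtain ⟨x, hx, -⟩ := (hVW2 c d hc hd).2.1
            exact ⟨x, hx⟩
        refine ⟨{p : K × K | p.2 = mul a p.1 + 0}, Or.inr ⟨a, 0, rfl⟩, ?_⟩
        rintro l (⟨c₀, rfl⟩ | ⟨a', b, rfl⟩) hpar
        · exfalso
          rcases hpar with heq | hdisj
          · have h1 : ((c₀ : K), mul a c₀ + 0 + one) ∈ {p : K × K | p.1 = c₀} := rfl
            rw [heq] at h1
            have h1' : mul a c₀ + 0 + one = mul a c₀ + 0 := h1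
            exact hone (add_eq_left.mp h1')
          · have hmem : ((c₀ : K), mul a c₀ + 0) ∈
                ({p : K × K | p.1 = c₀} ∩ {p : K × K | p.2 = mul a p.1 + 0}) :=
              ⟨rfl, rfl⟩
            exact Set.eq_empty_iff_forall_notMem.mp hdisj _ hmem
        · by_cases haa : a' = a
          · subst haa
            rw [himgS, ha, add_sub_cancel_right]
          · exfalso
            obtain ⟨x, hx, hxu⟩ := hVW5 a a' b (fun h => haa h.symm)
            rcases hpar with heq | hdisj
            · have h0 : ((0:K), mul a' 0 + b) ∈
                  {p : K × K | p.2 = mul a' p.1 + b} := rfl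
              have h1 : ((one:K), mul a' one + b) ∈
                  {p : K × K | p.2 = mul a' p.1 + b} := rfl
              rw [heq] at h0 h1
              have e0 : mul a (0:K) = mul a' 0 + b := by
                have h0' : mul a' 0 + b = mul a 0 + 0 := h0
                rw [add_zero] at h0'; exact h0'.symm
              have e1 : mul a one = mul a' one + b := by
                have h1' : mul a' one + b = mul a one + 0 := h1
                rw [add_zero] at h1'; exact h1'.symm
              exact hone ((hxu one e1).trans (hxu 0 e0).symm)
            · have hmem : ((x : K), mul a x + 0) ∈
                  ({p : K × K | p.2 = mul a' p.1 + b} ∩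
                   {p : K × K | p.2 = mul a p.1 + 0}) := by
                refine ⟨?_, rfl⟩
                show mul a x + 0 = mul a' x + b
                rw [add_zero, hx]
              exact Set.eq_empty_iff_forall_notMem.mp hdisj _ hmem
  refine ⟨main, ?_⟩
  intro p q
  refine ⟨fun r => (r.1 + (q.1 - p.1), r.2 + (q.2 - p.2)), main _ _, ?_⟩
  show (p.1 + (q.1 - p.1), p.2 + (q.2 - p.2)) = q
  exact Prod.ext (by simp) (by simp)
end

section
/- Let K be a right quasi-field. If for every nonzero v ∈ K the affine plane K² admits a translation taking (0,0) to (v,0), then the left distributivity law a(u+v) = au + av holds in K. -/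
/-- A right quasi-field: abelian additive group, VW2, VW3, right distributivity,
and unique solvability of xa = xa' + b for a ≠ a'. -/
def IsRightQuasifield {K : Type*} [AddCommGroup K] (mul : K → K → K) (one : K) : Prop :=
  one ≠ 0 ∧
  (∀ a b : K, a ≠ 0 → b ≠ 0 →
    (∃! x, mul a x = b) ∧ (∃! x, mul x a = b) ∧
    (∀ x, mul a x = b → x ≠ 0) ∧ (∀ x, mul x a = b → x ≠ 0) ∧ mul a b ≠ 0) ∧
  (∀ x : K, mul one x = x ∧ mul x one = x ∧ mul 0 x = 0 ∧ mul x 0 = 0) ∧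
  (∀ a x y : K, mul (x + y) a = mul x a + mul y a) ∧
  (∀ a a' b : K, a ≠ a' → ∃! x, mul x a = mul x a' + b)

/-- If a right quasi-field's plane admits, for each v ≠ 0, a translation taking
(0,0) to (v,0), then the left distributivity law holds in K. -/
theorem rightQuasifield_translations_imply_leftDistrib {K : Type*} [AddCommGroup K]
    (mul : K → K → K) (one : K) (hQ : IsRightQuasifield mul one)
    (htr : ∀ v : K, v ≠ 0 → ∃ f : K × K → K × K,
      IsTranslation (qLines mul) f ∧ f (0, 0) = (v, 0)) :
    ∀ a u v : K, mul a (u + v) = mul a u + mul a v := by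
  obtain ⟨hone, hsolv, hunit, hrd, htwo⟩ := hQ
  have h0l : ∀ x : K, mul 0 x = 0 := fun x => (hunit x).2.2.1
  have h0r : ∀ x : K, mul x 0 = 0 := fun x => (hunit x).2.2.2
  have h1l : ∀ x : K, mul one x = x := fun x => (hunit x).1
  have h1r : ∀ x : K, mul x one = x := fun x => (hunit x).2.1
  have hmne : ∀ c x : K, c ≠ 0 → x ≠ 0 → mul c x ≠ 0 :=
    fun c x hc hx => (hsolv c x hc hx).2.2.2.2
  have hsub : ∀ a x y : K, mul (x - y) a = mul x a - mul y a := by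
    intro a x y
    have h := hrd a (x - y) y
    rw [sub_add_cancel] at h
    exact eq_sub_of_add_eq h.symm
  have hsolveExists : ∀ c d : K, c ≠ 0 → ∃ x, mul c x = d := by
    intro c d hc
    by_cases hd : d = 0
    · exact ⟨0, by rw [h0r, hd]⟩
    · exact (hsolv c d hc hd).1.exists
  have key : ∀ v : K, v ≠ 0 → ∀ a x : K, mul a (x + v) = mul a x + mul a v := by
    intro v hv
    obtain ⟨f, ⟨hbij, hmaps, hpar, l₀, hl₀, hfixcls⟩, hf0⟩ := htr v hv
    rcases hl₀ with ⟨c, rfl⟩ | ⟨a₀, b₀, rfl⟩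
    · exfalso
      have hV : {p : K × K | p.1 = (0:K)} ∈ qLines mul := Or.inl ⟨0, rfl⟩
      have hParV : Parallel {p : K × K | p.1 = (0:K)} {p : K × K | p.1 = c} := by
        by_cases hc : c = 0
        · left; rw [hc]
        · right
          ext p
          simp only [Set.mem_inter_iff, Set.mem_setOf_eq, Set.mem_empty_iff_false, iff_false]
          rintro ⟨h1, h2⟩
          exact hc (by rw [← h2, h1])
      have hfV := hfixcls _ hV hParV
      have hm : f (0,0) ∈ {p : K × K | p.1 = (0:K)} := by
        rw [← hfV]; exact ⟨(0,0), rfl, rfl⟩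
      rw [hf0] at hm
      exact hv hm
    · have ha₀ : a₀ = 0 := by
        by_contra ha
        have hH : {p : K × K | p.2 = mul a₀ p.1 + 0} ∈ qLines mul := Or.inr ⟨a₀, 0, rfl⟩
        have hP : Parallel {p : K × K | p.2 = mul a₀ p.1 + 0}
            {p : K × K | p.2 = mul a₀ p.1 + b₀} := by
          by_cases hb : b₀ = 0
          · left; rw [hb]
          · right
            ext p
            simp only [Set.mem_inter_iff, Set.mem_setOf_eq, Set.mem_empty_iff_false, iff_false]
            rintro ⟨h1, h2⟩
            rw [h1] at h2
            exact hb (add_left_cancel h2).symm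
        have hfH := hfixcls _ hH hP
        have hm : f (0,0) ∈ {p : K × K | p.2 = mul a₀ p.1 + 0} := by
          rw [← hfH]
          exact ⟨(0,0), by simp [h0r], rfl⟩
        rw [hf0] at hm
        exact hmne a₀ v ha hv (by simpa using hm.symm)
      subst ha₀
      have hsnd : ∀ p : K × K, (f p).2 = p.2 := by
        intro p
        have hH : {q : K × K | q.2 = mul 0 q.1 + p.2} ∈ qLines mul := Or.inr ⟨0, p.2, rfl⟩
        have hP : Parallel {q : K × K | q.2 = mul 0 q.1 + p.2}
            {q : K × K | q.2 = mul 0 q.1 + b₀} := by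
          by_cases hb : p.2 = b₀
          · left; rw [hb]
          · right
            ext q
            simp only [Set.mem_inter_iff, Set.mem_setOf_eq, Set.mem_empty_iff_false, iff_false]
            rintro ⟨h1, h2⟩
            rw [h1] at h2
            exact hb (add_left_cancel h2)
        have hfH := hfixcls _ hH hP
        have hm : f p ∈ {q : K × K | q.2 = mul 0 q.1 + p.2} := by
          rw [← hfH]
          exact ⟨p, by simp [h0l], rfl⟩
        simpa [h0l] using hm
      have hfst : ∀ x y y' : K, (f (x, y)).1 = (f (x, y')).1 := by
        intro x y y'
        have hV : {p : K × K | p.1 = x} ∈ qLines mul := Or.inl ⟨x, rfl⟩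
        have hparV := hpar _ hV
        rcases hmaps _ hV with ⟨c, hc⟩ | ⟨a', b', hS⟩
        · have h1 : f (x, y) ∈ f '' {p : K × K | p.1 = x} := ⟨(x, y), rfl, rfl⟩
          have h2 : f (x, y') ∈ f '' {p : K × K | p.1 = x} := ⟨(x, y'), rfl, rfl⟩
          rw [hc] at h1 h2
          have h1' : (f (x, y)).1 = c := h1
          have h2' : (f (x, y')).1 = c := h2
          exact h1'.trans h2'.symm
        · exfalso
          rcases hparV with heq | hdisj
          · rw [hS] at heq
            have e1 : ((x, mul a' x + b' + one) : K × K) ∈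
                {p : K × K | p.2 = mul a' p.1 + b'} := by
              rw [heq]; rfl
            have e1' : mul a' x + b' + one = mul a' x + b' := e1
            exact hone (add_eq_left.mp e1')
          · rw [hS] at hdisj
            have hpt : ((x, mul a' x + b') : K × K) ∈
                {p : K × K | p.2 = mul a' p.1 + b'} ∩ {p : K × K | p.1 = x} := ⟨rfl, rfl⟩
            rw [hdisj] at hpt
            exact hpt
      set σ : K → K := fun x => (f (x, 0)).1 with hσdef
      have hfp : ∀ p : K × K, f p = (σ p.1, p.2) := by
        intro p
        exact Prod.ext (hfst p.1 p.2 0) (hsnd p)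
      have hσ0 : σ 0 = v := by
        show (f ((0 : K), (0 : K))).1 = v
        rw [hf0]
      have hC : ∀ a x : K, mul a (σ x) = mul a x + mul a v := by
        intro a x
        have hS : {p : K × K | p.2 = mul a p.1 + 0} ∈ qLines mul := Or.inr ⟨a, 0, rfl⟩
        have hparS := hpar _ hS
        rcases hmaps _ hS with ⟨c, hc⟩ | ⟨a', b', hc⟩
        · exfalso
          have m0 : f (0, mul a 0 + 0) ∈ f '' {p : K × K | p.2 = mul a p.1 + 0} :=
            ⟨_, rfl, rfl⟩
          have m1 : f (one, mul a one + 0) ∈ f '' {p : K × K | p.2 = mul a p.1 + 0} :=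
            ⟨_, rfl, rfl⟩
          rw [hc] at m0 m1
          rw [hfp] at m0 m1
          have e0 : σ 0 = c := m0
          have e1 : σ one = c := m1
          have heqf : f (one, 0) = f (0, 0) := by
            rw [hfp (one, 0), hfp (0, 0)]
            exact Prod.ext (e1.trans e0.symm) rfl
          have h10 := hbij.1 heqf
          exact hone (congrArg Prod.fst h10)
        · have haa : a' = a := by
            by_contra hne'
            rcases hparS with heq | hdisj
            · rw [hc] at heq
              have e0 : ((0 : K), mul a (0:K) + 0) ∈
                  {p : K × K | p.2 = mul a' p.1 + b'} := by
                rw [heq]; rfl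
              have e1 : ((one : K), mul a one + 0) ∈
                  {p : K × K | p.2 = mul a' p.1 + b'} := by
                rw [heq]; rfl
              have eb : b' = 0 := by
                have h' : mul a (0:K) + 0 = mul a' (0:K) + b' := e0
                simpa [h0r] using h'.symm
              have h' : mul a one + 0 = mul a' one + b' := e1
              rw [h1r, h1r, eb, add_zero, add_zero] at h'
              exact hne' h'.symm
            · rw [hc] at hdisj
              obtain ⟨x₀, hx₀⟩ := hsolveExists (a - a') b' (sub_ne_zero.mpr (Ne.symm hne'))
              rw [hsub x₀ a a'] at hx₀
              have hpt : ((x₀, mul a x₀ + 0) : K × K) ∈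
                  {p : K × K | p.2 = mul a' p.1 + b'} ∩
                  {p : K × K | p.2 = mul a p.1 + 0} := by
                refine ⟨?_, rfl⟩
                show mul a x₀ + 0 = mul a' x₀ + b'
                rw [add_zero, ← hx₀]
                abel
              rw [hdisj] at hpt
              exact hpt
          rw [haa] at hc
          have hb' : ∀ y : K, mul a y + 0 = mul a (σ y) + b' := by
            intro y
            have hm : f (y, mul a y + 0) ∈ {p : K × K | p.2 = mul a p.1 + b'} := by
              rw [← hc]
              exact ⟨_, rfl, rfl⟩
            rw [hfp] at hm
            exact hm
          have hb0 : mul a v + b' = 0 := by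
            have h' := (hb' 0).symm
            rw [h0r, hσ0] at h'
            simpa using h'
          have h' := hb' x
          rw [add_zero, eq_neg_of_add_eq_zero_right hb0] at h'
          rw [h']
          abel
      have hσeq : ∀ x : K, σ x = x + v := by
        intro x
        have h' := hC one x
        rwa [h1l, h1l, h1l] at h'
      intro a x
      rw [← hσeq x]
      exact hC a x
  intro a u v
  by_cases hv : v = 0
  · subst hv
    rw [add_zero, h0r, add_zero]
  · exact key v hv a u
end

section
/- Let K be a right quasi-field, and f a translation of the affine plane K² with f(0,0) = (v,0) for some v ≠ 0. Then f(a,b) = (a+v, b) for all (a,b) ∈ K². -/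
/-- A translation of the plane over a right quasi-field taking (0,0) to (v,0)
with v ≠ 0 is the map (a,b) ↦ (a+v, b). -/
theorem rightQuasifield_horizontal_translation {K : Type*} [AddCommGroup K]
    (mul : K → K → K) (one : K) (hQ : IsRightQuasifield mul one)
    (v : K) (hv : v ≠ 0) (f : K × K → K × K)
    (hf : IsTranslation (qLines mul) f) (h0 : f (0, 0) = (v, 0)) :
    ∀ a b : K, f (a, b) = (a + v, b) := by
  obtain ⟨hone, hVW2, hVW3, hdist, hVW5⟩ := hQ
  obtain ⟨hbij, hmapL, hparL, l₀, hl₀L, hfix⟩ := hf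
  have h1x : ∀ x : K, mul one x = x := fun x => (hVW3 x).1
  have h0x : ∀ x : K, mul 0 x = 0 := fun x => (hVW3 x).2.2.1
  have hx0 : ∀ x : K, mul x 0 = 0 := fun x => (hVW3 x).2.2.2
  have hnz : ∀ a b : K, a ≠ 0 → b ≠ 0 → mul a b ≠ 0 := fun a b ha hb => (hVW2 a b ha hb).2.2.2.2
  have hsolve : ∀ a b : K, a ≠ 0 → b ≠ 0 → ∃ x, mul a x = b :=
    fun a b ha hb => (hVW2 a b ha hb).1.exists
  have hVL : ∀ c : K, {p : K × K | p.1 = c} ∈ qLines mul := fun c => Or.inl ⟨c, rfl⟩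
  have hHL : ∀ b : K, {p : K × K | p.2 = b} ∈ qLines mul := by
    intro b; exact Or.inr ⟨0, b, by ext p; simp [h0x]⟩
  -- horizontal lines are fixed setwise
  have hHfix : ∀ b : K, f '' {p : K × K | p.2 = b} = {p : K × K | p.2 = b} := by
    rcases hl₀L with ⟨c, rfl⟩ | ⟨a, b₀, rfl⟩
    · exfalso
      have hpar0 : Parallel {p : K × K | p.1 = (0:K)} {p : K × K | p.1 = c} := by
        by_cases hc : c = 0
        · subst hc; exact Or.inl rfl
        · refine Or.inr (Set.eq_empty_iff_forall_notMem.mpr ?_)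
          rintro p ⟨h1, h2⟩
          simp only [Set.mem_setOf_eq] at h1 h2
          exact hc (by rw [← h2, h1])
      have hfx := hfix _ (hVL 0) hpar0
      have hmem : ((v, 0) : K × K) ∈ f '' {p : K × K | p.1 = (0:K)} :=
        ⟨(0, 0), rfl, h0⟩
      rw [hfx] at hmem
      exact hv hmem
    · have ha : a = 0 := by
        by_contra ha
        have hL : {p : K × K | p.2 = mul a p.1 + 0} ∈ qLines mul := Or.inr ⟨a, 0, rfl⟩
        have hpar0 : Parallel {p : K × K | p.2 = mul a p.1 + 0}
            {p : K × K | p.2 = mul a p.1 + b₀} := by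
          by_cases hb : b₀ = 0
          · subst hb; exact Or.inl rfl
          · refine Or.inr (Set.eq_empty_iff_forall_notMem.mpr ?_)
            rintro p ⟨h1, h2⟩
            simp only [Set.mem_setOf_eq] at h1 h2
            exact hb (add_left_cancel (h1.symm.trans h2)).symm
        have hfx := hfix _ hL hpar0
        have hmem : ((v, 0) : K × K) ∈ f '' {p : K × K | p.2 = mul a p.1 + 0} := by
          refine ⟨(0, 0), ?_, h0⟩
          simp [hx0]
        rw [hfx] at hmem
        simp only [Set.mem_setOf_eq, add_zero] at hmem
        exact hnz a v ha hv hmem.symm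
      subst ha
      intro b
      refine hfix _ (hHL b) ?_
      by_cases hb : b = b₀
      · subst hb; exact Or.inl (by ext p; simp [h0x])
      · refine Or.inr (Set.eq_empty_iff_forall_notMem.mpr ?_)
        rintro p ⟨h1, h2⟩
        simp only [Set.mem_setOf_eq, h0x, zero_add] at h1 h2
        exact hb (h1 ▸ h2)
  -- second coordinate is preserved
  have hsnd : ∀ p : K × K, (f p).2 = p.2 := by
    intro p
    have hm : f p ∈ f '' {q : K × K | q.2 = p.2} := ⟨p, rfl, rfl⟩
    rw [hHfix] at hm
    exact hm
  -- vertical lines map to vertical lines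
  have hVert : ∀ a : K, ∃ c, f '' {p : K × K | p.1 = a} = {p : K × K | p.1 = c} := by
    intro a
    rcases hmapL _ (hVL a) with ⟨c, hc⟩ | ⟨m, b, hmb⟩
    · exact ⟨c, hc⟩
    · exfalso
      have hpar := hparL _ (hVL a)
      rw [hmb] at hpar
      rcases hpar with heq | hdisj
      · have h1 : ((a, (0:K)) : K × K) ∈ {p : K × K | p.2 = mul m p.1 + b} := by
          rw [heq]; rfl
        have h2 : ((a, one) : K × K) ∈ {p : K × K | p.2 = mul m p.1 + b} := by
          rw [heq]; rfl
        simp only [Set.mem_setOf_eq] at h1 h2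
        exact hone (h2.trans h1.symm)
      · have : ((a, mul m a + b) : K × K) ∈
            ({p : K × K | p.2 = mul m p.1 + b} ∩ {p : K × K | p.1 = a}) := ⟨rfl, rfl⟩
        rw [hdisj] at this
        exact this
  -- f (x, y) = (g x, y)
  have hform : ∀ x y : K, f (x, y) = ((f (x, 0)).1, y) := by
    intro x y
    obtain ⟨c, hc⟩ := hVert x
    have h1 : f (x, y) ∈ {p : K × K | p.1 = c} := by
      rw [← hc]; exact ⟨(x, y), rfl, rfl⟩
    have h2 : f (x, 0) ∈ {p : K × K | p.1 = c} := by
      rw [← hc]; exact ⟨(x, 0), rfl, rfl⟩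
    have := (hsnd (x, y))
    ext
    · exact h1.trans h2.symm
    · exact hsnd (x, y)
  set g : K → K := fun x => (f (x, 0)).1 with hg
  have hg0 : g 0 = v := by show (f (0, 0)).1 = v; rw [h0]
  have hginj : ∀ x x' : K, g x = g x' → x = x' := by
    intro x x' h
    have : f (x, 0) = f (x', 0) := by rw [hform x 0, hform x' 0]; rw [show (f (x,0)).1 = g x from rfl, show (f (x',0)).1 = g x' from rfl, h]
    exact (Prod.ext_iff.mp (hbij.1 this)).1
  -- the diagonal line
  set l : Set (K × K) := {p : K × K | p.2 = mul one p.1 + 0} with hl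
  have hlL : l ∈ qLines mul := Or.inr ⟨one, 0, rfl⟩
  have hmeml : ∀ t : K, ((t, t) : K × K) ∈ l := by
    intro t; simp [hl, h1x]
  have himgmem : ∀ t : K, ((g t, t) : K × K) ∈ f '' l := by
    intro t
    refine ⟨(t, t), hmeml t, ?_⟩
    rw [hform t t]
  have hv0 : ((v, 0) : K × K) ∈ f '' l := by
    have := himgmem 0
    rwa [hg0] at this
  rcases hmapL _ hlL with ⟨c, hc⟩ | ⟨M, C, hMC⟩
  · exfalso
    have h1 : ((v, (0:K)) : K × K) ∈ {p : K × K | p.1 = c} := by rw [← hc]; exact hv0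
    have h2 : ((g one, one) : K × K) ∈ {p : K × K | p.1 = c} := by rw [← hc]; exact himgmem one
    simp only [Set.mem_setOf_eq] at h1 h2
    exact hone (hginj one 0 (by rw [hg0, h2, h1]))
  · have hCv : (0 : K) = mul M v + C := by
      have := hv0
      rw [hMC] at this
      exact this
    have hM0 : M ≠ 0 := by
      intro hM
      subst hM
      have h2 : ((g one, one) : K × K) ∈ {p : K × K | p.2 = mul 0 p.1 + C} := by
        rw [← hMC]; exact himgmem one
      simp only [Set.mem_setOf_eq, h0x, zero_add] at h2
      rw [h0x, zero_add] at hCv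
      exact hone (h2.trans hCv.symm)
    have hdisj : f '' l ∩ l = ∅ := by
      rcases hparL _ hlL with heq | hdisj
      · exfalso
        have : ((v, 0) : K × K) ∈ l := heq ▸ hv0
        simp only [hl, Set.mem_setOf_eq, h1x, add_zero] at this
        exact hv this.symm
      · exact hdisj
    have hM1 : M = one := by
      by_contra hM
      have hMone : M - one ≠ 0 := sub_ne_zero.mpr hM
      obtain ⟨x, hx⟩ := hsolve (M - one) (mul M v) hMone (hnz M v hM0 hv)
      -- mul (M - one) x = mul M x - x
      have hsplit : mul (M - one) x = mul M x - mul one x := by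
        have h1 : mul (M - one + one) x = mul (M - one) x + mul one x := hdist x (M - one) one
        rw [sub_add_cancel] at h1
        exact eq_sub_iff_add_eq.mpr h1.symm
      have hMv : mul M v = mul M x - x := by
        rw [← hx, hsplit, h1x]
      have hC : C = -mul M v := by
        have h2 : mul M v + C = 0 := hCv.symm
        rw [add_comm] at h2
        rwa [add_eq_zero_iff_eq_neg] at h2
      have hxx : ((x, x) : K × K) ∈ f '' l := by
        rw [hMC]
        show x = mul M x + C
        rw [hC, hMv]
        abel
      have : ((x, x) : K × K) ∈ f '' l ∩ l := ⟨hxx, hmeml x⟩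
      rw [hdisj] at this
      exact this
    rw [hM1] at hMC hCv
    have hC : C = -v := by
      have h2 : v + C = 0 := by rw [h1x] at hCv; exact hCv.symm
      rw [add_comm] at h2
      rwa [add_eq_zero_iff_eq_neg] at h2
    have hgt : ∀ t : K, g t = t + v := by
      intro t
      have hm := himgmem t
      rw [hMC] at hm
      have : t = mul one (g t) + C := hm
      rw [h1x, hC] at this
      exact (eq_add_neg_iff_add_eq.mp this).symm
    intro a b
    rw [hform a b]
    have : (f (a, 0)).1 = g a := rfl
    rw [this, hgt a]
end

section
/- Let K be a field with a finite group G of automorphisms, F the fixed field, N(x) = ∏_{g∈G} g(x) the norm, and φ : N(K*) → G any map with φ(1) = 1. Define α : K → G by α(x) = φ(N(x)) for x ≠ 0 and α(0) = 1, and the multiplication x ⊙ y = x·α(x)(y). Then K with this multiplication, the original addition, 0, and 1 is a left quasi-field. -/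
/-- A left quasi-field: abelian additive group and axioms VW2–VW5. -/
def IsLeftQuasifieldMul {K : Type*} [AddCommGroup K] (mul : K → K → K) (one : K) : Prop :=
  one ≠ 0 ∧
  (∀ a b : K, a ≠ 0 → b ≠ 0 →
    (∃! x, mul a x = b) ∧ (∃! x, mul x a = b) ∧
    (∀ x, mul a x = b → x ≠ 0) ∧ (∀ x, mul x a = b → x ≠ 0) ∧ mul a b ≠ 0) ∧
  (∀ x : K, mul one x = x ∧ mul x one = x ∧ mul 0 x = 0 ∧ mul x 0 = 0) ∧
  (∀ a x y : K, mul a (x + y) = mul a x + mul a y) ∧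
  (∀ a a' b : K, a ≠ a' → ∃! x, mul a x = mul a' x + b)

/-- The André construction: a field K with a finite group G of automorphisms,
norm N(x) = ∏_{g ∈ G} g(x), a map φ on the norms with φ(1) = 1, α(x) = φ(N(x))
for x ≠ 0 and α(0) = id, and x ⊙ y = x·α(x)(y), yields a left quasi-field. -/
theorem andre_leftQuasifield {K : Type*} [Field K]
    (G : Subgroup (K ≃+* K)) [Fintype G]
    (N : K → K) (hN : ∀ x, N x = ∏ g : G, (g : K ≃+* K) x)
    (φ : K → (K ≃+* K)) (hφG : ∀ u, φ u ∈ G) (hφ1 : φ 1 = RingEquiv.refl K)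
    (α : K → (K ≃+* K)) (hα0 : α 0 = RingEquiv.refl K)
    (hα : ∀ x : K, x ≠ 0 → α x = φ (N x)) :
    IsLeftQuasifieldMul (fun x y : K => x * α x y) (1 : K) := by
  classical
  -- norm is invariant under G
  have hgN : ∀ g : G, ∀ x : K, N ((g : K ≃+* K) x) = N x := by
    intro g x
    rw [hN, hN]
    exact Fintype.prod_equiv (Equiv.mulRight g)
      (fun h => (h : K ≃+* K) ((g : K ≃+* K) x))
      (fun h => (h : K ≃+* K) x) (fun h => rfl)
  -- norm is multiplicative
  have hNmul : ∀ x y : K, N (x * y) = N x * N y := by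
    intro x y
    simp [hN, map_mul, Finset.prod_mul_distrib]
  have hN1 : N 1 = 1 := by simp [hN]
  have hNne : ∀ x : K, x ≠ 0 → N x ≠ 0 := by
    intro x hx
    rw [hN]
    exact Finset.prod_ne_zero_iff.2 fun g _ h =>
      hx ((g : K ≃+* K).injective (h.trans (map_zero (g : K ≃+* K)).symm))
  have hN0 : N 0 = 0 := by
    rw [hN]
    exact Finset.prod_eq_zero (Finset.mem_univ 1) (map_zero _)
  have hαG : ∀ x : K, α x ∈ G := by
    intro x
    by_cases hx : x = 0
    · subst hx
      rw [hα0, show RingEquiv.refl K = (1 : K ≃+* K) from rfl]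
      exact G.one_mem
    · rw [hα x hx]; exact hφG _
  have hα1 : α 1 = RingEquiv.refl K := by rw [hα (1 : K) one_ne_zero, hN1, hφ1]
  -- key norm identity
  have hkey : ∀ x y : K, N (x * α x y) = N x * N y := by
    intro x y
    rw [hNmul]
    congr 1
    exact hgN ⟨α x, hαG x⟩ y
  refine ⟨one_ne_zero, ?_, ?_, ?_, ?_⟩
  · -- VW2
    intro a b ha hb
    have hzero : ∀ x : K, x * α x a = b → x ≠ 0 := by
      rintro x hx rfl
      rw [hα0] at hx
      simp at hx
      exact hb hx.symm
    have hNinv : ∀ z : K, z ≠ 0 → N z⁻¹ = (N z)⁻¹ := by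
      intro z hz
      have h := hNmul z z⁻¹
      rw [mul_inv_cancel₀ hz, hN1] at h
      exact eq_inv_of_mul_eq_one_right h.symm
    refine ⟨?_, ?_, ?_, hzero, ?_⟩
    · -- ∃! x, a * α a x = b
      refine ⟨(α a).symm (a⁻¹ * b), ?_, ?_⟩
      · show a * (α a) ((α a).symm (a⁻¹ * b)) = b
        rw [RingEquiv.apply_symm_apply, mul_inv_cancel_left₀ ha]
      · intro y hy
        have h2 : (α a) y = a⁻¹ * b := by
          rw [← hy, inv_mul_cancel_left₀ ha]
        apply (α a).injective
        rw [h2, RingEquiv.apply_symm_apply]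
    · -- ∃! x, x * α x a = b
      set g : K ≃+* K := φ (N b * (N a)⁻¹) with hg
      have hgG : g ∈ G := hφG _
      have hga : g a ≠ 0 := fun h => ha (g.injective (by simp [h, map_zero]))
      set x₀ : K := b * (g a)⁻¹ with hx₀
      have hx₀ne : x₀ ≠ 0 := mul_ne_zero hb (inv_ne_zero hga)
      have hNga : N (g a) = N a := hgN ⟨g, hgG⟩ a
      have hNx₀ : N x₀ = N b * (N a)⁻¹ := by
        rw [hx₀, hNmul, hNinv _ hga, hNga]
      have hαx₀ : α x₀ = g := by rw [hα _ hx₀ne, hNx₀, hg]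
      -- the general "norm forces the automorphism" step
      have huniq : ∀ x : K, x * α x a = b → x = x₀ := by
        intro x hx
        have hxne : x ≠ 0 := hzero x hx
        have hNx : N x = N b * (N a)⁻¹ := by
          have h := hkey x a
          rw [hx] at h
          exact (eq_mul_inv_iff_mul_eq₀ (hNne a ha)).2 h.symm
        have hax : α x = g := by rw [hα _ hxne, hNx, hg]
        rw [hax] at hx
        rw [hx₀]
        exact (eq_mul_inv_iff_mul_eq₀ hga).2 hx
      refine ⟨x₀, ?_, huniq⟩
      show x₀ * (α x₀) a = b
      rw [hαx₀, hx₀, inv_mul_cancel_right₀ hga]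
    · rintro x hx rfl
      simp only [map_zero, mul_zero] at hx
      exact hb hx.symm
    · exact mul_ne_zero ha fun h => hb ((α a).injective (by simp [h, map_zero]))
  · -- VW3
    intro x
    refine ⟨?_, ?_, ?_, ?_⟩
    · simp [hα1]
    · simp
    · simp
    · simp
  · -- VW4
    intro a x y
    simp [map_add, mul_add]
  · -- VW5
    intro a a' b hne
    -- work over the fixed field
    letI : MulSemiringAction G K := Subgroup.mulSemiringAction G
    set F := FixedPoints.subfield G K
    have hfix : ∀ (g : K ≃+* K), g ∈ G → ∀ c : F, g (c : K) = (c : K) := by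
      intro g hg c
      exact c.2 ⟨g, hg⟩
    -- the F-linear map x ↦ a ⊙ x - a' ⊙ x
    let L : K →ₗ[F] K :=
      { toFun := fun x => a * α a x - a' * α a' x
        map_add' := fun x y => by simp [map_add]; ring
        map_smul' := fun c x => by
          have h1 : (α a) ((c : K) * x) = (c : K) * α a x := by
            rw [map_mul, hfix (α a) (hαG a) c]
          have h2 : (α a') ((c : K) * x) = (c : K) * α a' x := by
            rw [map_mul, hfix (α a') (hαG a') c]
          simp only [Subfield.smul_def, smul_eq_mul, RingHom.id_apply, h1, h2]
          ring }
    have hLinj : Function.Injective L := by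
      rw [injective_iff_map_eq_zero]
      intro x hx
      by_contra hxne
      have heq : a * α a x = a' * α a' x := sub_eq_zero.1 hx
      have ha : a ≠ 0 := by
        rintro rfl
        rw [zero_mul] at heq
        rcases mul_eq_zero.1 heq.symm with h | h
        · exact hne h.symm
        · exact hxne ((α a').injective (by simpa using h))
      have ha' : a' ≠ 0 := by
        rintro rfl
        rw [zero_mul] at heq
        rcases mul_eq_zero.1 heq with h | h
        · exact hne h
        · exact hxne ((α a).injective (by simpa using h))
      have hNeq : N a = N a' := by
        have h1 := hkey a x
        have h2 := hkey a' x
        rw [heq, h2] at h1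
        exact (mul_right_cancel₀ (hNne x hxne) h1).symm
      have hαeq : α a = α a' := by rw [hα a ha, hα a' ha', hNeq]
      rw [hαeq] at heq
      have : a = a' := mul_right_cancel₀
        (fun h => hxne ((α a').injective (by simpa using h))) heq
      exact hne this
    have hLsurj : Function.Surjective L :=
      (LinearMap.injective_iff_surjective).1 hLinj
    obtain ⟨x, hx⟩ := hLsurj b
    refine ⟨x, ?_, ?_⟩
    · show a * α a x = a' * α a' x + b
      exact sub_eq_iff_eq_add'.1 hx
    · intro y hy
      apply hLinj
      have hy2 : a * α a y = a' * α a' y + b := hy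
      have hy' : a * α a y - a' * α a' y = b := sub_eq_iff_eq_add'.2 hy2
      rw [hx]
      exact hy'
end

section
/- With K, G, N, φ, α and x ⊙ y = x·α(x)(y) as in the André quasi-field construction, the multiplication ⊙ is associative if and only if φ is a multiplicative homomorphism on N(K*), i.e., φ(uv) = φ(u)φ(v) for all u, v ∈ N(K*). -/
/-- In the André construction, the multiplication x ⊙ y = x·α(x)(y) is associative
if and only if φ is multiplicative on N(K*). -/
theorem andre_assoc_iff_hom {K : Type*} [Field K]
    (G : Subgroup (K ≃+* K)) [Fintype G]
    (N : K → K) (hN : ∀ x, N x = ∏ g : G, (g : K ≃+* K) x)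
    (φ : K → (K ≃+* K)) (hφG : ∀ u, φ u ∈ G) (hφ1 : φ 1 = RingEquiv.refl K)
    (α : K → (K ≃+* K)) (hα0 : α 0 = RingEquiv.refl K)
    (hα : ∀ x : K, x ≠ 0 → α x = φ (N x)) :
    (∀ x y z : K, (x * α x y) * α (x * α x y) z = x * α x (y * α y z)) ↔
    (∀ u v : K, (∃ x : K, x ≠ 0 ∧ N x = u) → (∃ y : K, y ≠ 0 ∧ N y = v) →
      φ (u * v) = φ u * φ v) := by
  have hNmul : ∀ a b : K, N (a * b) = N a * N b := by
    intro a b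
    simp only [hN, map_mul, Finset.prod_mul_distrib]
  have hNg : ∀ g : K ≃+* K, g ∈ G → ∀ b : K, N (g b) = N b := by
    intro g hg b
    rw [hN, hN]
    exact Fintype.prod_equiv (Equiv.mulRight (⟨g, hg⟩ : G)) _ _ (fun h => rfl)
  have hNne : ∀ x : K, x ≠ 0 → N x ≠ 0 := by
    intro x hx
    rw [hN]
    exact Finset.prod_ne_zero_iff.mpr fun g _ =>
      (map_ne_zero_iff _ (g : K ≃+* K).injective).mpr hx
  constructor
  · rintro hassoc u v ⟨x, hx, rfl⟩ ⟨y, hy, rfl⟩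
    have hαxy : α x y ≠ 0 := by
      rw [hα x hx]
      exact (map_ne_zero_iff _ (φ (N x)).injective).mpr hy
    have hxy : x * α x y ≠ 0 := mul_ne_zero hx hαxy
    have hNxy : N (x * α x y) = N x * N y := by
      rw [hNmul, hα x hx, hNg _ (hφG _)]
    have hkey : α (x * α x y) = α x * α y := by
      ext z
      have h := hassoc x y z
      rw [map_mul, ← mul_assoc] at h
      exact mul_left_cancel₀ hxy h
    calc φ (N x * N y) = φ (N (x * α x y)) := by rw [hNxy]
      _ = α (x * α x y) := (hα _ hxy).symm
      _ = α x * α y := hkey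
      _ = φ (N x) * φ (N y) := by rw [hα x hx, hα y hy]
  · intro hhom x y z
    by_cases hx : x = 0
    · subst hx; simp [hα0]
    by_cases hy : y = 0
    · subst hy; simp [hα0]
    have hαxy : α x y ≠ 0 := by
      rw [hα x hx]
      exact (map_ne_zero_iff _ (φ (N x)).injective).mpr hy
    have hxy : x * α x y ≠ 0 := mul_ne_zero hx hαxy
    have hkey : α (x * α x y) = α x * α y := by
      rw [hα _ hxy, hNmul, hα x hx, hNg _ (hφG _),
        hhom _ _ ⟨x, hx, rfl⟩ ⟨y, hy, rfl⟩, hα y hy]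
    rw [hkey, map_mul, ← mul_assoc]
    rfl
end

section
/- With K, G, N, φ, α and x ⊙ y = x·α(x)(y) as in the André quasi-field construction, the right distributivity law (x+y) ⊙ a = x ⊙ a + y ⊙ a holds for all x, y, a if and only if φ maps every element of N(K*) to the identity automorphism (in which case ⊙ coincides with the field multiplication). -/
/-- In the André construction, the right distributivity law (x+y) ⊙ a = x ⊙ a + y ⊙ a
holds if and only if φ maps every element of N(K*) to the identity automorphism,
in which case ⊙ coincides with the field multiplication. -/
theorem andre_rightDistrib_iff_trivial {K : Type*} [Field K]
    (G : Subgroup (K ≃+* K)) [Fintype G]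
    (N : K → K) (hN : ∀ x, N x = ∏ g : G, (g : K ≃+* K) x)
    (φ : K → (K ≃+* K)) (hφG : ∀ u, φ u ∈ G) (hφ1 : φ 1 = RingEquiv.refl K)
    (α : K → (K ≃+* K)) (hα0 : α 0 = RingEquiv.refl K)
    (hα : ∀ x : K, x ≠ 0 → α x = φ (N x)) :
    ((∀ x y a : K, (x + y) * α (x + y) a = x * α x a + y * α y a) ↔
      (∀ x : K, x ≠ 0 → φ (N x) = RingEquiv.refl K)) ∧
    ((∀ x : K, x ≠ 0 → φ (N x) = RingEquiv.refl K) →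
      ∀ x y : K, x * α x y = x * y) := by
  have hN1 : N 1 = 1 := by rw [hN]; simp
  have hα1 : α 1 = RingEquiv.refl K := by rw [hα 1 one_ne_zero, hN1, hφ1]
  constructor
  · constructor
    · intro hd x hx
      -- key claim: α is constant on nonzero elements
      have key : ∀ u v : K, u ≠ 0 → v ≠ 0 → α u = α v := by
        intro u v hu hv
        by_contra hne
        obtain ⟨b, hb⟩ : ∃ b, α u b ≠ α v b := by
          by_contra hall
          push_neg at hall
          exact hne (RingEquiv.ext hall)
        by_cases huv : u + v = 0
        · -- v = -u, then distributivity with a := b gives α u b = α v b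
          have E := hd u v b
          rw [huv] at E
          apply hb
          have hveq : u * α v b = - (v * α v b) := by
            have : v = -u := by linear_combination huv
            rw [this]; ring
          have : u * α u b = u * α v b := by linear_combination -E - hveq
          exact mul_left_cancel₀ hu this
        · -- three-character argument
          have E2 := hd u v b
          -- derive : (u+v) * (α (u+v) b - α u b) * α (u+v) a = v * (α v b - α u b) * α v a
          have step : ∀ a : K, (u + v) * (α (u+v) b - α u b) * α (u+v) a
              = v * (α v b - α u b) * α v a := by
            intro a
            have E1 := hd u v (b * a)
            rw [map_mul, map_mul, map_mul] at E1
            have E2' := hd u v a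
            linear_combination E1 - (α u b) * E2'
          have s1 := step 1
          simp only [map_one, mul_one] at s1
          have hd0 : v * (α v b - α u b) ≠ 0 :=
            mul_ne_zero hv (sub_ne_zero.mpr (Ne.symm hb))
          have hc0 : (u + v) * (α (u+v) b - α u b) ≠ 0 := by rw [s1]; exact hd0
          -- hence α (u+v) a = α v a for all a, in particular at b
          have hkb : α (u+v) b = α v b := by
            have := step b
            rw [s1] at this
            exact mul_left_cancel₀ hd0 this
          -- plug back into E2
          rw [hkb] at E2
          apply hb
          have : u * α u b = u * α v b := by linear_combination -E2
          exact mul_left_cancel₀ hu this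
      rw [← hα x hx, key x 1 hx one_ne_zero, hα1]
    · intro h x y a
      have hαtriv : ∀ z : K, α z = RingEquiv.refl K := fun z => by
        by_cases hz : z = 0
        · rw [hz, hα0]
        · rw [hα z hz, h z hz]
      simp [hαtriv]
      ring
  · intro h x y
    by_cases hx : x = 0
    · simp [hx]
    · rw [hα x hx, h x hx]; simp
end
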